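/- For all n ≥ 0 and all m ≥ 0: ∑_{k=0}^{n} C(n,k)²·(m+1)^k = ∑_{k=0}^{n} C(n+k,2k)·C(2k,k)·m^{n-k}. -/

import Mathlib

open Finset

lemma vand_aux (n j : ℕ) (hj : j ≤ n) :
    ∑ i ∈ Finset.range (n - j + 1), n.choose (j + i) * (n - j).choose i =
      (n + (n - j)).choose (n - j) := by
  rw [Nat.add_choose_eq, Finset.Nat.sum_antidiagonal_eq_sum_range_succ
      (fun p q => n.choose p * (n - j).choose q)]
  rw [← Finset.sum_range_reflect]
  apply Finset.sum_congr rfl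
  intro i hi
  simp only [Finset.mem_range, Nat.lt_succ_iff] at hi
  have h1 : j + (n - j + 1 - 1 - i) = n - i := by omega
  rw [h1, Nat.choose_symm (by omega : i ≤ n)]
  congr 2

lemma coeff_lemma (n j : ℕ) (hj : j ≤ n) :
    ∑ k ∈ Finset.range (n + 1), n.choose k ^ 2 * k.choose j =
      (n + (n - j)).choose (2 * (n - j)) * (2 * (n - j)).choose (n - j) := by
  have hsplit : ∑ k ∈ Finset.range (n + 1), n.choose k ^ 2 * k.choose j =
      ∑ k ∈ Finset.Ico j (n + 1), n.choose k ^ 2 * k.choose j := by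
    rw [Finset.range_eq_Ico, ← Finset.sum_Ico_consecutive _ (Nat.zero_le j) (by omega)]
    have : ∑ k ∈ Finset.Ico 0 j, n.choose k ^ 2 * k.choose j = 0 := by
      apply Finset.sum_eq_zero
      intro k hk
      simp only [Finset.mem_Ico] at hk
      rw [Nat.choose_eq_zero_of_lt hk.2, mul_zero]
    rw [this, zero_add]
  rw [hsplit, Finset.sum_Ico_eq_sum_range]
  have hterm : ∀ i ∈ Finset.range (n + 1 - j),
      n.choose (j + i) ^ 2 * (j + i).choose j =
        n.choose j * (n.choose (j + i) * (n - j).choose i) := by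
    intro i hi
    simp only [Finset.mem_range] at hi
    have hkn : j + i ≤ n := by omega
    have h := Nat.choose_mul (n := n) (Nat.le_add_right j i)
    have h2 : j + i - j = i := by omega
    rw [h2] at h
    rw [pow_two, mul_assoc, h]
    ring
  rw [Finset.sum_congr rfl hterm, ← Finset.mul_sum]
  have hr : n + 1 - j = n - j + 1 := by omega
  rw [hr, vand_aux n j hj]
  -- now: n.choose j * (n + (n - j)).choose (n - j) = ...
  set d := n - j with hd
  have hN : n + d = j + 2 * d := by omega
  have h1 : (n + d).choose n * n.choose j = (n + d).choose j * (n + d - j).choose (n - j) :=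
    Nat.choose_mul hj
  have h2 : n + d - j = 2 * d := by omega
  have h3 : (n + d).choose n = (n + d).choose d := Nat.choose_symm_of_eq_add rfl
  have h4 : (n + d).choose j = (n + d).choose (2 * d) := Nat.choose_symm_of_eq_add hN
  rw [h2, h3, h4, ← hd] at h1
  rw [mul_comm, h1]

theorem schroeder_identity (n m : ℕ) :
    ∑ k ∈ Finset.range (n + 1), n.choose k ^ 2 * (m + 1) ^ k =
      ∑ k ∈ Finset.range (n + 1),
        (n + k).choose (2 * k) * (2 * k).choose k * m ^ (n - k) := by
  -- Expand (m+1)^k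
  have lhs1 : ∀ k ∈ Finset.range (n + 1),
      n.choose k ^ 2 * (m + 1) ^ k =
        ∑ j ∈ Finset.range (n + 1), n.choose k ^ 2 * (k.choose j * m ^ j) := by
    intro k hk
    simp only [Finset.mem_range, Nat.lt_succ_iff] at hk
    rw [add_pow, ← Finset.mul_sum]
    congr 1
    rw [Finset.sum_subset (Finset.range_subset_range.mpr (Nat.succ_le_succ hk))]
    · apply Finset.sum_congr rfl
      intro j _
      push_cast
      ring
    · intro j _ hj
      simp only [Finset.mem_range, Nat.lt_succ_iff, not_le] at hj
      rw [Nat.choose_eq_zero_of_lt hj]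
      simp
  rw [Finset.sum_congr rfl lhs1, Finset.sum_comm]
  have lhs2 : ∀ j ∈ Finset.range (n + 1),
      ∑ k ∈ Finset.range (n + 1), n.choose k ^ 2 * (k.choose j * m ^ j) =
        (n + (n - j)).choose (2 * (n - j)) * (2 * (n - j)).choose (n - j) * m ^ j := by
    intro j hj
    simp only [Finset.mem_range, Nat.lt_succ_iff] at hj
    calc ∑ k ∈ Finset.range (n + 1), n.choose k ^ 2 * (k.choose j * m ^ j)
        = (∑ k ∈ Finset.range (n + 1), n.choose k ^ 2 * k.choose j) * m ^ j := by
          rw [Finset.sum_mul]; apply Finset.sum_congr rfl; intro k _; ring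
      _ = _ := by rw [coeff_lemma n j hj]
  rw [Finset.sum_congr rfl lhs2]
  -- Reflect the RHS
  rw [← Finset.sum_range_reflect (fun k => (n + k).choose (2 * k) * (2 * k).choose k * m ^ (n - k))]
  apply Finset.sum_congr rfl
  intro j hj
  simp only [Finset.mem_range, Nat.lt_succ_iff] at hj
  have h1 : n + 1 - 1 - j = n - j := by omega
  have h2 : n - (n - j) = j := by omega
  rw [h1, h2]
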